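/- Let M be a module over the ring R = ℤ[t]/(t²−1) fitting into a short exact sequence of R-modules 0 → R/I → M → R/J → 0 or into a short exact sequence 0 → R/J → M → R/I → 0, where I = (t−1) and J = (t+1). Then either M is isomorphic as an R-module to R, or M is isomorphic as an R-module to (R/I) ⊕ (R/J). -/

import Mathlib

noncomputable section

abbrev R : Type := Polynomial ℤ ⧸ Ideal.span ({Polynomial.X ^ 2 - 1} : Set (Polynomial ℤ))

def t : R := Ideal.Quotient.mk _ Polynomial.X

def I : Ideal R := Ideal.span {t - 1}
def J : Ideal R := Ideal.span {t + 1}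

lemma t_sq : t * t = 1 := by
  rw [t, ← map_mul, show (1 : R) = Ideal.Quotient.mk _ 1 from rfl, Ideal.Quotient.eq]
  have h : (Polynomial.X * Polynomial.X - 1 : Polynomial ℤ) = Polynomial.X ^ 2 - 1 := by ring
  rw [h]
  exact Ideal.subset_span rfl

/-- If `t` maps to the integer `c` in `R ⧸ span {u}`, then every element of the quotient is an
integer. -/
lemma integral_of (u : R) (c : ℤ)
    (hc : Ideal.Quotient.mk (Ideal.span {u}) t = (c : R ⧸ Ideal.span {u})) :
    ∀ a : R ⧸ Ideal.span {u}, ∃ k : ℤ, a = (k : R ⧸ Ideal.span {u}) := by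
  intro a
  obtain ⟨r, rfl⟩ := Ideal.Quotient.mk_surjective a
  obtain ⟨p, rfl⟩ := Ideal.Quotient.mk_surjective r
  refine ⟨p.eval c, ?_⟩
  set ψ : Polynomial ℤ →+* R ⧸ Ideal.span {u} :=
    (Ideal.Quotient.mk (Ideal.span {u})).comp (Ideal.Quotient.mk _) with hψ
  show ψ p = _
  have hX : ψ Polynomial.X = (c : R ⧸ Ideal.span {u}) := hc
  induction p using Polynomial.induction_on' with
  | add p q hp hq => rw [map_add, hp, hq, Polynomial.eval_add]; push_cast; ring
  | monomial n a =>
    have hCa : ψ (Polynomial.C a) = ((a : ℤ) : R ⧸ Ideal.span {u}) := by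
      have h1 : Polynomial.C a = ((a : ℤ) : Polynomial ℤ) := by simp
      rw [h1, map_intCast]
    rw [← Polynomial.C_mul_X_pow_eq_monomial, map_mul, map_pow, hX, hCa,
      Polynomial.eval_mul, Polynomial.eval_pow, Polynomial.eval_C, Polynomial.eval_X]
    rw [← Int.cast_pow]
    exact (Int.cast_mul (α := R ⧸ Ideal.span {u}) a (c ^ n)).symm

set_option maxHeartbeats 1000000 in
lemma key (u v : R) (ε : ℤ) (hε : ε * ε = 1) (hveq : v = u + 2 * (ε : R))
    (huv : u * v = 0)
    (hZ : ∀ a : R ⧸ Ideal.span {u}, ∃ k : ℤ, a = (k : R ⧸ Ideal.span {u}))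
    (M : Type) [AddCommGroup M] [Module R M]
    (f : (R ⧸ Ideal.span {u}) →ₗ[R] M)
    (g : M →ₗ[R] (R ⧸ Ideal.span ({v} : Set R)))
    (hf : Function.Injective f) (hg : Function.Surjective g)
    (hfg : LinearMap.range f = LinearMap.ker g) :
    Nonempty (M ≃ₗ[R] R) ∨
      Nonempty (M ≃ₗ[R] ((R ⧸ Ideal.span {u}) × (R ⧸ Ideal.span ({v} : Set R)))) := by
  have mk_smul_u : ∀ (r x : R), r • (Ideal.Quotient.mk (Ideal.span {u}) x)
      = Ideal.Quotient.mk (Ideal.span {u}) (r * x) := fun r x => rfl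
  have mk_smul_v : ∀ (r x : R), r • (Ideal.Quotient.mk (Ideal.span ({v} : Set R)) x)
      = Ideal.Quotient.mk (Ideal.span ({v} : Set R)) (r * x) := fun r x => rfl
  have one_u : (1 : R ⧸ Ideal.span {u}) = Ideal.Quotient.mk _ 1 := rfl
  have one_v : (1 : R ⧸ Ideal.span ({v} : Set R)) = Ideal.Quotient.mk _ 1 := rfl
  have hu0 : Ideal.Quotient.mk (Ideal.span {u}) u = 0 :=
    Ideal.Quotient.eq_zero_iff_mem.2 (Ideal.subset_span rfl)
  have hv0 : Ideal.Quotient.mk (Ideal.span ({v} : Set R)) v = 0 :=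
    Ideal.Quotient.eq_zero_iff_mem.2 (Ideal.subset_span rfl)
  have cast_u : ∀ k : ℤ, ((k : ℤ) : R ⧸ Ideal.span {u}) = ((k : ℤ) : R) • 1 := by
    intro k
    rw [one_u, mk_smul_u, mul_one, map_intCast]
  set e : M := f 1 with he
  -- g kills the range of f
  have hgf : ∀ a, g (f a) = 0 := by
    intro a
    have h1 : f a ∈ LinearMap.range f := LinearMap.mem_range_self f a
    rw [hfg] at h1
    exact h1
  -- v acts as 2ε on e
  have hve : v • e = ((2 * ε : ℤ) : R) • e := by
    rw [he, ← map_smul, ← map_smul]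
    congr 1
    rw [one_u, mk_smul_u, mk_smul_u, mul_one, mul_one, Ideal.Quotient.eq, hveq]
    have : u + 2 * (ε : R) - ((2 * ε : ℤ) : R) = u := by push_cast; ring
    rw [this]
    exact Ideal.subset_span rfl
  -- choose a preimage of the generator of R ⧸ span v
  obtain ⟨m, hm⟩ := hg (1 : R ⧸ Ideal.span ({v} : Set R))
  -- v • m lies in the kernel of g, hence in the range of f
  have hvm_ker : v • m ∈ LinearMap.ker g := by
    rw [LinearMap.mem_ker, map_smul, hm, one_v, mk_smul_v, mul_one, hv0]
  rw [← hfg] at hvm_ker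
  obtain ⟨a, ha⟩ := hvm_ker
  obtain ⟨k, rfl⟩ := hZ a
  have hk : v • m = ((k : ℤ) : R) • e := by
    rw [← ha, cast_u, map_smul, he]
  rcases Int.even_or_odd k with ⟨c, hc⟩ | ⟨c, hc⟩
  · -- even case: the extension splits
    right
    set m' : M := m - ((ε * c : ℤ) : R) • e with hm'
    have hvm' : v • m' = 0 := by
      rw [hm', smul_sub, hk, smul_smul, mul_comm v, mul_smul, hve, smul_smul, ← sub_smul]
      have h1 : ((k : ℤ) : R) - ((ε * c : ℤ) : R) * ((2 * ε : ℤ) : R) = ((0 : ℤ) : R) := by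
        push_cast
        have h2 : (k : R) = 2 * (c : R) := by rw [hc]; push_cast; ring
        rw [h2]
        have h3 : ((ε : R)) * ((ε : R)) = 1 := by
          have := congrArg (fun n : ℤ => (n : R)) hε
          push_cast at this
          exact this
        linear_combination (-2 * (c : R)) * h3
      rw [h1, Int.cast_zero]
      exact zero_smul R e
    have hgm' : g m' = 1 := by
      rw [hm', map_sub, map_smul, hm, he, hgf, smul_zero, sub_zero]
    have hker : Ideal.span ({v} : Set R) ≤ LinearMap.ker (LinearMap.toSpanSingleton R M m') := by
      rw [Ideal.span_le]
      rintro x rfl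
      show x • m' = 0
      exact hvm'
    set s : (R ⧸ Ideal.span ({v} : Set R)) →ₗ[R] M :=
      Submodule.liftQ _ (LinearMap.toSpanSingleton R M m') hker with hs
    have hs_apply : ∀ r : R, s (Ideal.Quotient.mk _ r) = r • m' := fun r => rfl
    have hgs : ∀ b, g (s b) = b := by
      intro b
      obtain ⟨r, rfl⟩ := Ideal.Quotient.mk_surjective b
      rw [hs_apply, map_smul, hgm', one_v, mk_smul_v, mul_one]
    set Φ : ((R ⧸ Ideal.span {u}) × (R ⧸ Ideal.span ({v} : Set R))) →ₗ[R] M :=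
      f.coprod s with hΦ
    have hΦ_apply : ∀ p : (R ⧸ Ideal.span {u}) × (R ⧸ Ideal.span ({v} : Set R)),
        Φ p = f p.1 + s p.2 := fun p => rfl
    have hΦ_bij : Function.Bijective Φ := by
      constructor
      · rw [injective_iff_map_eq_zero]
        rintro ⟨a, b⟩ hab
        rw [hΦ_apply] at hab
        have hb : b = 0 := by
          have h1 := congrArg g hab
          rw [map_add, hgf, hgs, zero_add, map_zero] at h1
          exact h1
        rw [hb, map_zero, add_zero] at hab
        have ha0 : a = 0 := hf (by rw [hab, map_zero])
        rw [Prod.ext_iff]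
        exact ⟨ha0, hb⟩
      · intro x
        have hx : x - s (g x) ∈ LinearMap.range f := by
          rw [hfg, LinearMap.mem_ker, map_sub, hgs, sub_self]
        obtain ⟨a, ha'⟩ := hx
        refine ⟨(a, g x), ?_⟩
        rw [hΦ_apply]
        simp only []
        rw [ha']
        abel
    exact ⟨(LinearEquiv.ofBijective Φ hΦ_bij).symm⟩
  · -- odd case: M is free of rank one
    left
    set m' : M := m - ((ε * c : ℤ) : R) • e with hm'
    have hvm' : v • m' = e := by
      rw [hm', smul_sub, hk, smul_smul, mul_comm v, mul_smul, hve, smul_smul, ← sub_smul]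
      have h1 : ((k : ℤ) : R) - ((ε * c : ℤ) : R) * ((2 * ε : ℤ) : R) = ((1 : ℤ) : R) := by
        push_cast
        have h2 : (k : R) = 2 * (c : R) + 1 := by rw [hc]; push_cast; ring
        rw [h2]
        have h3 : ((ε : R)) * ((ε : R)) = 1 := by
          have := congrArg (fun n : ℤ => (n : R)) hε
          push_cast at this
          exact this
        linear_combination (-2 * (c : R)) * h3
      rw [h1]
      simp
    have hgm' : g m' = 1 := by
      rw [hm', map_sub, map_smul, hm, he, hgf, smul_zero, sub_zero]
    set φ : R →ₗ[R] M := LinearMap.toSpanSingleton R M m' with hφ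
    have hφ_apply : ∀ r : R, φ r = r • m' := fun r => rfl
    have hφ_bij : Function.Bijective φ := by
      constructor
      · rw [injective_iff_map_eq_zero]
        intro r hr
        rw [hφ_apply] at hr
        have h1 : Ideal.Quotient.mk (Ideal.span ({v} : Set R)) r = 0 := by
          have h2 := congrArg g hr
          rw [map_smul, hgm', one_v, mk_smul_v, mul_one, map_zero] at h2
          exact h2
        obtain ⟨w, hw⟩ := Ideal.mem_span_singleton'.1 (Ideal.Quotient.eq_zero_iff_mem.1 h1)
        have h2 : w • e = 0 := by
          rw [← hvm', smul_smul, hw, hr]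
        have h3 : Ideal.Quotient.mk (Ideal.span {u}) w = 0 := by
          apply hf
          rw [map_zero, ← h2, he, ← map_smul]
          congr 1
          rw [one_u, mk_smul_u, mul_one]
        obtain ⟨y, hy⟩ := Ideal.mem_span_singleton'.1 (Ideal.Quotient.eq_zero_iff_mem.1 h3)
        rw [← hw, ← hy, mul_assoc, huv, mul_zero]
      · intro x
        obtain ⟨r, hr⟩ := Ideal.Quotient.mk_surjective (g x)
        have hx : x - r • m' ∈ LinearMap.range f := by
          rw [hfg, LinearMap.mem_ker, map_sub, map_smul, hgm', ← hr, one_v, mk_smul_v, mul_one,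
            sub_self]
        obtain ⟨a, ha'⟩ := hx
        obtain ⟨j, rfl⟩ := hZ a
        refine ⟨r + (j : R) * v, ?_⟩
        rw [hφ_apply, add_smul, mul_smul, hvm']
        rw [cast_u, map_smul, ← he] at ha'
        rw [ha']
        abel
    exact ⟨(LinearEquiv.ofBijective φ hφ_bij).symm⟩

theorem extension_of_RmodI_and_RmodJ (M : Type) [AddCommGroup M] [Module R M]
    (h : (∃ (f : (R ⧸ I) →ₗ[R] M) (g : M →ₗ[R] (R ⧸ J)),
            Function.Injective f ∧ Function.Surjective g ∧
            LinearMap.range f = LinearMap.ker g) ∨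
         (∃ (f : (R ⧸ J) →ₗ[R] M) (g : M →ₗ[R] (R ⧸ I)),
            Function.Injective f ∧ Function.Surjective g ∧
            LinearMap.range f = LinearMap.ker g)) :
    Nonempty (M ≃ₗ[R] R) ∨ Nonempty (M ≃ₗ[R] ((R ⧸ I) × (R ⧸ J))) := by
  rcases h with ⟨f, g, hf, hg, hfg⟩ | ⟨f, g, hf, hg, hfg⟩
  · -- u = t - 1, v = t + 1, ε = 1
    have hZ : ∀ a : R ⧸ Ideal.span {t - 1}, ∃ k : ℤ, a = (k : R ⧸ Ideal.span {t - 1}) := by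
      apply integral_of (t - 1) 1
      rw [show ((1 : ℤ) : R ⧸ Ideal.span {t - 1}) = Ideal.Quotient.mk _ 1 by push_cast; rfl,
        Ideal.Quotient.eq]
      exact Ideal.subset_span rfl
    have := key (t - 1) (t + 1) 1 (by ring) (by push_cast; ring)
      (by linear_combination t_sq) hZ M f g hf hg hfg
    rcases this with h1 | h1
    · exact Or.inl h1
    · exact Or.inr h1
  · -- u = t + 1, v = t - 1, ε = -1
    have hZ : ∀ a : R ⧸ Ideal.span {t + 1}, ∃ k : ℤ, a = (k : R ⧸ Ideal.span {t + 1}) := by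
      apply integral_of (t + 1) (-1)
      rw [show ((-1 : ℤ) : R ⧸ Ideal.span {t + 1}) = Ideal.Quotient.mk _ (-1) by
        push_cast; rfl, Ideal.Quotient.eq]
      rw [show t - (-1) = t + 1 by ring]
      exact Ideal.subset_span rfl
    have := key (t + 1) (t - 1) (-1) (by ring) (by push_cast; ring)
      (by linear_combination t_sq) hZ M f g hf hg hfg
    rcases this with h1 | h1
    · exact Or.inl h1
    · exact Or.inr ⟨h1.some.trans (LinearEquiv.prodComm R _ _)⟩
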